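/- In the boy-centered, day-neutral procedure, where among families with at least one boy a uniformly random boy's birth day is announced, the conditional probability of two boys given announcement '(B, Tuesday)' equals 1/3. -/

import Mathlib

inductive Gender | B | G deriving DecidableEq

instance : Fintype Gender := ⟨{Gender.B, Gender.G}, by intro x; cases x <;> simp⟩

/-- A child is a (gender, weekday) pair; a family is a pair of children. -/
abbrev Child := Gender × Fin 7
abbrev Family := Child × Child

/-- Conditional probability under the uniform distribution on a finite type. -/
def condProb {α : Type*} [Fintype α] (A E : α → Prop) [DecidablePred A] [DecidablePred E] : ℚ :=
  ((Finset.univ.filter fun s => A s ∧ E s).card : ℚ) / ((Finset.univ.filter E).card : ℚ)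

/-- Boy-centered day announcement: two-boy families announce the day of the
coin-chosen boy, one-boy families announce their boy'"'"'s day, others nothing. -/
def boyDay (x : Family × Bool) : Option (Fin 7) :=
  match x.1.1.1, x.1.2.1 with
  | Gender.B, Gender.B => some (if x.2 then x.1.1.2 else x.1.2.2)
  | Gender.B, Gender.G => some x.1.1.2
  | Gender.G, Gender.B => some x.1.2.2
  | Gender.G, Gender.G => none

set_option maxRecDepth 100000 in
theorem stmt_9 (t : Fin 7) :
    condProb (fun x : Family × Bool => x.1.1.1 = Gender.B ∧ x.1.2.1 = Gender.B)
      (fun x => boyDay x = some t) = 1 / 3 := by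
  have key : ∀ t : Fin 7,
      ((Finset.univ.filter fun x : Family × Bool =>
          (x.1.1.1 = Gender.B ∧ x.1.2.1 = Gender.B) ∧ boyDay x = some t).card = 14) ∧
      ((Finset.univ.filter fun x : Family × Bool => boyDay x = some t).card = 42) := by decide
  unfold condProb
  rw [(key t).1, (key t).2]
  norm_num
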